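/- The ring 𝓡 = ℂ[s,A,B,C,D,E]/I_{sE}, viewed as a module over ℂ[s] via the natural map s ↦ class of s, is flat. -/

import Mathlib

open MvPolynomial

/-- Variables: `s = X 0`, `A = X 1`, `B = X 2`, `C = X 3`, `D = X 4`, `E = X 5`. -/
noncomputable def n₁ : MvPolynomial (Fin 6) ℂ :=
  ((X 1) ^ 2 + (X 0) ^ 5 * (X 5) ^ 5) * (X 1) ^ 2 - X 2 * X 3

noncomputable def n₂ : MvPolynomial (Fin 6) ℂ :=
  ((X 1) ^ 2 + (X 0) ^ 5 * (X 5) ^ 5) * ((X 2) ^ 2 - X 4) - X 3 * X 4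

noncomputable def n₃ : MvPolynomial (Fin 6) ℂ :=
  X 2 * ((X 2) ^ 2 - X 4) - (X 1) ^ 2 * X 4

/-- The ideal generated by the three 2×2 minors of
`[[A² + s⁵E⁵, B, D], [C, A², B² − D]]`. -/
noncomputable def I_sE : Ideal (MvPolynomial (Fin 6) ℂ) :=
  Ideal.span {n₁, n₂, n₃}

/-- The `ℂ[s]`-algebra structure on `𝓡 = ℂ[s,A,B,C,D,E]/I_{sE}` given by the
natural map `s ↦` class of `s`. -/
noncomputable instance : Algebra (Polynomial ℂ) (MvPolynomial (Fin 6) ℂ ⧸ I_sE) :=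
  (Polynomial.aeval (Ideal.Quotient.mk I_sE (X 0)) :
    Polynomial ℂ →ₐ[ℂ] MvPolynomial (Fin 6) ℂ ⧸ I_sE).toRingHom.toAlgebra

/-! ### Auxiliary material for the proof -/

namespace Stmt18

section Core
open Polynomial

variable {U : Type*} [CommRing U] [IsDomain U]


variable {U : Type*} [CommRing U] [IsDomain U]

lemma core_step (a a2 b d : U)
    (hbd : ∀ x y : U, b * x = d * y → ∃ t : U, x = d * t ∧ y = b * t)
    (N : ℕ) (g₁ g₂ g₃ : U[X])
    (h₁d : g₁.natDegree ≤ N) (h₂d : g₂.natDegree ≤ N) (h₃d : g₃.natDegree ≤ N + 1)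
    (E : g₁ * (Polynomial.C (a*a2) - Polynomial.C b * Polynomial.X) + g₂ * (Polynomial.C (a*(b^2-d)) - Polynomial.C d * Polynomial.X)
        + g₃ * Polynomial.C (b*(b^2-d) - a2*d) = 0) :
    ∃ p q G₁ G₂ G₃ : U[X],
      g₁ = G₁ + p * Polynomial.C d + q * Polynomial.C (b^2-d) ∧
      g₂ = G₂ - p * Polynomial.C b - q * Polynomial.C a2 ∧
      g₃ = G₃ + p * Polynomial.C a + q * Polynomial.X ∧
      (G₁ * (Polynomial.C (a*a2) - Polynomial.C b * Polynomial.X) + G₂ * (Polynomial.C (a*(b^2-d)) - Polynomial.C d * Polynomial.X)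
        + G₃ * Polynomial.C (b*(b^2-d) - a2*d) = 0) ∧
      (∀ k, N ≤ k → G₁.coeff k = 0) ∧ (∀ k, N ≤ k → G₂.coeff k = 0) ∧
      G₃.natDegree ≤ N := by
  have Id2 : (Polynomial.C (b^2-d)) * (Polynomial.C (a*a2) - Polynomial.C b * Polynomial.X) - Polynomial.C a2 * (Polynomial.C (a*(b^2-d)) - Polynomial.C d * Polynomial.X)
      + Polynomial.X * Polynomial.C (b*(b^2-d) - a2*d) = 0 := by
    simp only [map_mul, map_sub, map_pow]; ring
  have Id1 : Polynomial.C d * (Polynomial.C (a*a2) - Polynomial.C b * Polynomial.X) - Polynomial.C b * (Polynomial.C (a*(b^2-d)) - Polynomial.C d * Polynomial.X)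
      + Polynomial.C a * Polynomial.C (b*(b^2-d) - a2*d) = 0 := by
    simp only [map_mul, map_sub, map_pow]; ring
  set q := g₃.divX with hqdef
  set u := g₃.coeff 0 with hudef
  have hq : Polynomial.X * q + Polynomial.C u = g₃ := X_mul_divX_add g₃
  have hqdeg : q.natDegree ≤ N := by
    have h1 : q.natDegree = g₃.natDegree - 1 := g₃.natDegree_divX_eq_natDegree_tsub_one
    omega
  set g₁' := g₁ - q * Polynomial.C (b^2 - d) with hg1'def
  set g₂' := g₂ + q * Polynomial.C a2 with hg2'def
  have hg₁'deg : g₁'.natDegree ≤ N := by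
    refine le_trans (natDegree_sub_le _ _) (max_le h₁d ?_)
    refine le_trans (natDegree_mul_le) ?_
    simpa using hqdeg
  have hg₂'deg : g₂'.natDegree ≤ N := by
    refine le_trans (natDegree_add_le _ _) (max_le h₂d ?_)
    refine le_trans (natDegree_mul_le) ?_
    simpa using hqdeg
  have E' : g₁' * (Polynomial.C (a*a2) - Polynomial.C b * Polynomial.X) + g₂' * (Polynomial.C (a*(b^2-d)) - Polynomial.C d * Polynomial.X)
      + Polynomial.C u * Polynomial.C (b*(b^2-d) - a2*d) = 0 := by
    linear_combination E - q * Id2 + Polynomial.C (b*(b^2-d) - a2*d) * hq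
  have E2 : g₁'*Polynomial.C (a*a2) + g₂'*Polynomial.C (a*(b^2-d)) + Polynomial.C u * Polynomial.C (b*(b^2-d) - a2*d)
      = (g₁' * Polynomial.C b + g₂' * Polynomial.C d) * Polynomial.X := by
    linear_combination E'
  have hcoeff : (0:U) = g₁'.coeff N * b + g₂'.coeff N * d := by
    have h3 := congrArg (fun P => Polynomial.coeff P (N+1)) E2
    simp only [Polynomial.coeff_add, coeff_mul_C, Polynomial.coeff_mul_X, ← Polynomial.C_mul, Polynomial.coeff_C] at h3
    rw [coeff_eq_zero_of_natDegree_lt (lt_of_le_of_lt hg₁'deg (Nat.lt_succ_self N)),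
        coeff_eq_zero_of_natDegree_lt (lt_of_le_of_lt hg₂'deg (Nat.lt_succ_self N))] at h3
    simpa using h3
  obtain ⟨t, ht1, ht2⟩ := hbd (g₁'.coeff N) (-(g₂'.coeff N))
    (by linear_combination -hcoeff)
  have hdt : (Polynomial.C (d*t) : U[X]) = Polynomial.C d * Polynomial.C t := Polynomial.C_mul
  have hbt : (Polynomial.C (b*t) : U[X]) = Polynomial.C b * Polynomial.C t := Polynomial.C_mul
  have hat : (Polynomial.C (a*t) : U[X]) = Polynomial.C a * Polynomial.C t := Polynomial.C_mul
  have hcm : ∀ (α : U) (k : ℕ), ((Polynomial.C α * Polynomial.X^N : U[X])).coeff k = if k = N then α else 0 := by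
    intro α k
    rw [Polynomial.coeff_C_mul, Polynomial.coeff_X_pow]
    split <;> simp
  refine ⟨Polynomial.C t * Polynomial.X^N, q, g₁' - Polynomial.C (d*t) * Polynomial.X^N, g₂' + Polynomial.C (b*t) * Polynomial.X^N,
    Polynomial.C u - Polynomial.C (a*t) * Polynomial.X^N, by rw [hdt]; ring, by rw [hbt]; ring,
    by rw [hat]; linear_combination -hq, ?_, ?_, ?_, ?_⟩
  · linear_combination E' - (Polynomial.C t * Polynomial.X^N) * Id1
      - (Polynomial.X^N * (Polynomial.C (a*a2) - Polynomial.C b * Polynomial.X)) * hdt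
      + (Polynomial.X^N * (Polynomial.C (a*(b^2-d)) - Polynomial.C d * Polynomial.X)) * hbt
      - (Polynomial.X^N * Polynomial.C (b*(b^2-d) - a2*d)) * hat
  · intro k hk
    rw [Polynomial.coeff_sub, hcm]
    rcases eq_or_lt_of_le hk with rfl | hlt
    · simp [ht1]
    · rw [if_neg (by omega), coeff_eq_zero_of_natDegree_lt (lt_of_le_of_lt hg₁'deg hlt),
        sub_zero]
  · intro k hk
    rw [Polynomial.coeff_add, hcm]
    rcases eq_or_lt_of_le hk with rfl | hlt
    · rw [if_pos rfl]; linear_combination -ht2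
    · rw [if_neg (by omega), coeff_eq_zero_of_natDegree_lt (lt_of_le_of_lt hg₂'deg hlt),
        add_zero]
  · refine le_trans (natDegree_sub_le _ _) (max_le (by simp) ?_)
    exact natDegree_C_mul_X_pow_le _ _

lemma core_syzygy (a a2 b d : U)
    (hbd : ∀ x y : U, b * x = d * y → ∃ t : U, x = d * t ∧ y = b * t)
    (hn3 : b*(b^2-d) - a2*d ≠ 0) :
    ∀ (N : ℕ) (g₁ g₂ g₃ : U[X]), g₁.natDegree ≤ N → g₂.natDegree ≤ N →
      g₃.natDegree ≤ N + 1 →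
      g₁ * (Polynomial.C (a*a2) - Polynomial.C b * Polynomial.X) + g₂ * (Polynomial.C (a*(b^2-d)) - Polynomial.C d * Polynomial.X)
        + g₃ * Polynomial.C (b*(b^2-d) - a2*d) = 0 →
      ∃ h₁ h₂ : U[X],
        g₁ = h₁ * Polynomial.C d + h₂ * Polynomial.C (b^2-d) ∧
        g₂ = -(h₁ * Polynomial.C b) - h₂ * Polynomial.C a2 ∧
        g₃ = h₁ * Polynomial.C a + h₂ * Polynomial.X := by
  intro N
  induction N with
  | zero =>
    intro g₁ g₂ g₃ hd1 hd2 hd3 E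
    obtain ⟨p, q, G₁, G₂, G₃, e1, e2, e3, E', c1, c2, d3⟩ :=
      core_step a a2 b d hbd 0 g₁ g₂ g₃ hd1 hd2 hd3 E
    have hG₁ : G₁ = 0 := Polynomial.ext fun k => by simpa using c1 k (Nat.zero_le k)
    have hG₂ : G₂ = 0 := Polynomial.ext fun k => by simpa using c2 k (Nat.zero_le k)
    rw [hG₁, hG₂] at E'
    simp only [zero_mul, zero_add] at E'
    have hG₃ : G₃ = 0 := by
      rcases mul_eq_zero.mp E' with h | h
      · exact h
      · exact absurd (Polynomial.C_eq_zero.mp h) hn3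
    exact ⟨p, q, by rw [e1, hG₁]; ring, by rw [e2, hG₂]; ring, by rw [e3, hG₃]; ring⟩
  | succ M ih =>
    intro g₁ g₂ g₃ hd1 hd2 hd3 E
    obtain ⟨p, q, G₁, G₂, G₃, e1, e2, e3, E', c1, c2, d3⟩ :=
      core_step a a2 b d hbd (M+1) g₁ g₂ g₃ hd1 hd2 hd3 E
    have hG₁ : G₁.natDegree ≤ M := natDegree_le_iff_coeff_eq_zero.mpr fun m hm => c1 m hm
    have hG₂ : G₂.natDegree ≤ M := natDegree_le_iff_coeff_eq_zero.mpr fun m hm => c2 m hm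
    obtain ⟨h₁, h₂, f1, f2, f3⟩ := ih G₁ G₂ G₃ hG₁ hG₂ d3 E'
    exact ⟨h₁ + p, h₂ + q, by rw [e1, f1]; ring, by rw [e2, f2]; ring,
      by rw [e3, f3]; ring⟩

lemma core_main (a a2 b d : U)
    (hbd : ∀ x y : U, b * x = d * y → ∃ t : U, x = d * t ∧ y = b * t)
    (hn3 : b*(b^2-d) - a2*d ≠ 0) (g₁ g₂ g₃ : U[X])
    (E : g₁ * (Polynomial.C (a*a2) - Polynomial.C b * Polynomial.X) + g₂ * (Polynomial.C (a*(b^2-d)) - Polynomial.C d * Polynomial.X)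
        + g₃ * Polynomial.C (b*(b^2-d) - a2*d) = 0) :
    ∃ h₁ h₂ : U[X],
      g₁ = h₁ * Polynomial.C d + h₂ * Polynomial.C (b^2-d) ∧
      g₂ = -(h₁ * Polynomial.C b) - h₂ * Polynomial.C a2 ∧
      g₃ = h₁ * Polynomial.C a + h₂ * Polynomial.X := by
  refine core_syzygy a a2 b d hbd hn3
    (max (max g₁.natDegree g₂.natDegree) g₃.natDegree) g₁ g₂ g₃ ?_ ?_ ?_ E
  · exact le_trans (le_max_left _ _) (le_max_left _ _)
  · exact le_trans (le_max_right _ _) (le_max_left _ _)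
  · exact le_trans (le_max_right _ _) (Nat.le_succ _)


end Core

variable {σ : Type*} [DecidableEq σ] {R : Type*} [CommRing R]

/-- Substitute the variable `v` by the constant `c`, fixing all other variables. -/
noncomputable def subst (v : σ) (c : R) : MvPolynomial σ R →ₐ[R] MvPolynomial σ R :=
  aeval (fun i => if i = v then C c else X i)

lemma subst_X_self (v : σ) (c : R) : subst v c (X v) = C c := by simp [subst]

lemma subst_X_ne (v : σ) (c : R) {i : σ} (h : i ≠ v) : subst v c (X i) = X i := by
  simp [subst, h]

lemma subst_subst (v : σ) (c : R) (f : MvPolynomial σ R) :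
    subst v c (subst v c f) = subst v c f := by
  have h : (subst v c).comp (subst v c) = subst v c := by
    apply MvPolynomial.algHom_ext
    intro i
    by_cases h : i = v
    · subst h; simp [subst_X_self]
    · simp [subst_X_ne v c h, h, subst]
  exact DFunLike.congr_fun h f

lemma sub_dvd_subst (v : σ) (c : R) (f : MvPolynomial σ R) :
    (X v - C c) ∣ f - subst v c f := by
  induction f using MvPolynomial.induction_on with
  | C a => simp [subst]
  | add p q hp hq =>
    rw [map_add]
    have h1 : p + q - (subst v c p + subst v c q)
        = (p - subst v c p) + (q - subst v c q) := by ring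
    rw [h1]
    exact dvd_add hp hq
  | mul_X p i hp =>
    rw [map_mul]
    by_cases h : i = v
    · rw [h, subst_X_self]
      have h1 : p * X v - subst v c p * C c
          = (p - subst v c p) * X v + subst v c p * (X v - C c) := by ring
      rw [h1]
      exact dvd_add (hp.mul_right _) (Dvd.intro_left _ rfl)
    · rw [subst_X_ne v c h]
      have h1 : p * X i - subst v c p * X i = (p - subst v c p) * X i := by ring
      rw [h1]
      exact hp.mul_right _

lemma X_sub_C_ne_zero [Nontrivial R] (v : σ) (c : R) :
    (X v - C c : MvPolynomial σ R) ≠ 0 := by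
  intro h
  have h2 : (X v : MvPolynomial σ R) = C c := by linear_combination h
  have h3 := congrArg (fun p => MvPolynomial.coeff (Finsupp.single v 1) p) h2
  simp only [MvPolynomial.coeff_X, MvPolynomial.coeff_C] at h3
  rw [if_neg (by simp [eq_comm] : ¬(0 : σ →₀ ℕ) = Finsupp.single v 1)] at h3
  exact one_ne_zero h3

/-- The regularity of the pair `(X 2, X 3)` in `ℂ[A,B,C,D,E]`. -/
lemma hbdU : ∀ x y : MvPolynomial (Fin 5) ℂ,
    X 2 * x = X 3 * y → ∃ t, x = X 3 * t ∧ y = X 2 * t := by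
  intro x y h
  have h0 : subst (3 : Fin 5) (0 : ℂ) x = 0 := by
    have h1 := congrArg (subst (3 : Fin 5) (0 : ℂ)) h
    rw [map_mul, map_mul, subst_X_self, subst_X_ne _ _ (by decide : (2 : Fin 5) ≠ 3),
      map_zero, zero_mul] at h1
    exact (mul_eq_zero.mp h1).resolve_left (MvPolynomial.X_ne_zero _)
  have hdvd : (X 3 : MvPolynomial (Fin 5) ℂ) ∣ x := by
    have h2 := sub_dvd_subst (3 : Fin 5) (0 : ℂ) x
    rw [h0, sub_zero, map_zero, sub_zero] at h2
    exact h2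
  obtain ⟨t, rfl⟩ := hdvd
  refine ⟨t, rfl, ?_⟩
  apply mul_left_cancel₀ (MvPolynomial.X_ne_zero (3 : Fin 5))
  linear_combination -h

lemma hn3U : (X 2 * ((X 2 : MvPolynomial (Fin 5) ℂ)^2 - X 3) - (X 1)^2 * X 3) ≠ 0 := by
  intro h
  have h1 := congrArg (MvPolynomial.eval (fun i : Fin 5 => if i = 2 then (1 : ℂ) else 0)) h
  simp at h1


def e6 : Fin 6 ≃ Option (Fin 5) where
  toFun := ![some 0, some 1, some 2, none, some 3, some 4]
  invFun o := o.elim 3 ![0, 1, 2, 4, 5]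
  left_inv := by decide
  right_inv := by decide

/-- Extract the variable `X 3` (the variable `C`) as a polynomial variable. -/
noncomputable def Φ : MvPolynomial (Fin 6) ℂ ≃ₐ[ℂ] Polynomial (MvPolynomial (Fin 5) ℂ) :=
  (renameEquiv ℂ e6).trans (optionEquivLeft ℂ (Fin 5))

lemma e6_0 : e6 0 = some 0 := rfl
lemma e6_1 : e6 1 = some 1 := rfl
lemma e6_2 : e6 2 = some 2 := rfl
lemma e6_3 : e6 3 = none := rfl
lemma e6_4 : e6 4 = some 3 := rfl
lemma e6_5 : e6 5 = some 4 := rfl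

lemma Φ_X0 : Φ (X 0) = Polynomial.C (X 0) := by
  simp [Φ, e6_0, optionEquivLeft_X_some, rename_X]
lemma Φ_X1 : Φ (X 1) = Polynomial.C (X 1) := by
  simp [Φ, e6_1, optionEquivLeft_X_some, rename_X]
lemma Φ_X2 : Φ (X 2) = Polynomial.C (X 2) := by
  simp [Φ, e6_2, optionEquivLeft_X_some, rename_X]
lemma Φ_X3 : Φ (X 3) = Polynomial.X := by
  simp [Φ, e6_3, optionEquivLeft_X_none, rename_X]
lemma Φ_X4 : Φ (X 4) = Polynomial.C (X 3) := by
  simp [Φ, e6_4, optionEquivLeft_X_some, rename_X]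
lemma Φ_X5 : Φ (X 5) = Polynomial.C (X 4) := by
  simp [Φ, e6_5, optionEquivLeft_X_some, rename_X]
lemma Φ_C (α : ℂ) : Φ (C α) = Polynomial.C (C α) := by
  simp [Φ, e6]


/-! ### The regularity of `X 0 - C c` modulo `I_sE` -/

lemma mem_I_iff (x : MvPolynomial (Fin 6) ℂ) :
    x ∈ I_sE ↔ ∃ g₁ g₂ g₃ : MvPolynomial (Fin 6) ℂ,
      x = g₁ * n₁ + g₂ * n₂ + g₃ * n₃ := by
  constructor
  · intro hx
    rw [I_sE, show ({n₁, n₂, n₃} : Set (MvPolynomial (Fin 6) ℂ))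
        = insert n₁ (insert n₂ {n₃}) from rfl, Ideal.mem_span_insert] at hx
    obtain ⟨g₁, z, hz, rfl⟩ := hx
    rw [Ideal.mem_span_insert] at hz
    obtain ⟨g₂, w, hw, rfl⟩ := hz
    rw [Ideal.mem_span_singleton'] at hw
    obtain ⟨g₃, rfl⟩ := hw
    exact ⟨g₁, g₂, g₃, by ring⟩
  · rintro ⟨g₁, g₂, g₃, rfl⟩
    have h₁ : n₁ ∈ I_sE := Ideal.subset_span (by simp)
    have h₂ : n₂ ∈ I_sE := Ideal.subset_span (by simp)
    have h₃ : n₃ ∈ I_sE := Ideal.subset_span (by simp)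
    exact add_mem (add_mem (I_sE.mul_mem_left _ h₁) (I_sE.mul_mem_left _ h₂))
      (I_sE.mul_mem_left _ h₃)

noncomputable def eps (c : ℂ) : MvPolynomial (Fin 6) ℂ →ₐ[ℂ] MvPolynomial (Fin 6) ℂ :=
  subst (0 : Fin 6) c

lemma eps_X0 (c : ℂ) : eps c (X 0) = C c := subst_X_self 0 c
lemma eps_X1 (c : ℂ) : eps c (X 1) = X 1 := subst_X_ne 0 c (by decide)
lemma eps_X2 (c : ℂ) : eps c (X 2) = X 2 := subst_X_ne 0 c (by decide)
lemma eps_X3 (c : ℂ) : eps c (X 3) = X 3 := subst_X_ne 0 c (by decide)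
lemma eps_X4 (c : ℂ) : eps c (X 4) = X 4 := subst_X_ne 0 c (by decide)
lemma eps_X5 (c : ℂ) : eps c (X 5) = X 5 := subst_X_ne 0 c (by decide)
lemma eps_C (c α : ℂ) : eps c (C α) = C α := by
  simp [eps, subst]
lemma eps_eps (c : ℂ) (f : MvPolynomial (Fin 6) ℂ) : eps c (eps c f) = eps c f :=
  subst_subst 0 c f
lemma eps_dvd (c : ℂ) (f : MvPolynomial (Fin 6) ℂ) :
    (X 0 - C c) ∣ f - eps c f := sub_dvd_subst 0 c f

lemma reg (c : ℂ) (f : MvPolynomial (Fin 6) ℂ)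
    (h : (X 0 - C c) * f ∈ I_sE) : f ∈ I_sE := by
  classical
  obtain ⟨g₁, g₂, g₃, hrep⟩ := (mem_I_iff _).mp h
  have hEn : eps c (X 0 - C c) = 0 := by
    rw [map_sub, eps_X0, eps_C, sub_self]
  have hsyz : eps c g₁ * eps c n₁ + eps c g₂ * eps c n₂ + eps c g₃ * eps c n₃ = 0 := by
    have h1 := congrArg (eps c) hrep
    rw [map_mul, hEn, zero_mul, map_add, map_add, map_mul, map_mul, map_mul] at h1
    exact h1.symm
  -- the images of the generators under the fiber map, transported through `Φ`
  set a : MvPolynomial (Fin 5) ℂ := X 1 ^ 2 + (C c) ^ 5 * X 4 ^ 5 with ha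
  have hεn₁ : eps c n₁ = ((X 1) ^ 2 + (C c) ^ 5 * (X 5) ^ 5) * (X 1) ^ 2 - X 2 * X 3 := by
    rw [n₁]
    simp only [map_sub, map_mul, map_add, map_pow, eps_X0, eps_X1, eps_X2, eps_X3, eps_X5]
  have hεn₂ : eps c n₂ = ((X 1) ^ 2 + (C c) ^ 5 * (X 5) ^ 5) * ((X 2) ^ 2 - X 4) - X 3 * X 4 := by
    rw [n₂]
    simp only [map_sub, map_mul, map_add, map_pow, eps_X0, eps_X1, eps_X2, eps_X3, eps_X4,
      eps_X5]
  have hεn₃ : eps c n₃ = X 2 * ((X 2) ^ 2 - X 4) - (X 1) ^ 2 * X 4 := by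
    rw [n₃]
    simp only [map_sub, map_mul, map_pow, eps_X1, eps_X2, eps_X4]
  have HN1 : Φ (eps c n₁) = Polynomial.C (a * X 1 ^ 2) - Polynomial.C (X 2) * Polynomial.X := by
    rw [hεn₁, ha]
    simp only [map_sub, map_mul, map_add, map_pow, Φ_X1, Φ_X2, Φ_X3, Φ_X5, Φ_C]
  have HN2 : Φ (eps c n₂) = Polynomial.C (a * ((X 2) ^ 2 - X 3))
      - Polynomial.C (X 3) * Polynomial.X := by
    rw [hεn₂, ha]
    simp only [map_sub, map_mul, map_add, map_pow, Φ_X1, Φ_X2, Φ_X3, Φ_X4, Φ_X5, Φ_C]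
    ring
  have HN3 : Φ (eps c n₃) = Polynomial.C (X 2 * ((X 2) ^ 2 - X 3) - (X 1) ^ 2 * X 3) := by
    rw [hεn₃]
    simp only [map_sub, map_mul, map_pow, Φ_X1, Φ_X2, Φ_X4]
  have hsyz2 : Φ (eps c g₁) * (Polynomial.C (a * X 1 ^ 2) - Polynomial.C (X 2) * Polynomial.X)
      + Φ (eps c g₂) * (Polynomial.C (a * ((X 2) ^ 2 - X 3)) - Polynomial.C (X 3) * Polynomial.X)
      + Φ (eps c g₃) * Polynomial.C (X 2 * ((X 2) ^ 2 - X 3) - (X 1) ^ 2 * X 3) = 0 := by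
    have h2 := congrArg Φ hsyz
    rw [map_add, map_add, map_mul, map_mul, map_mul, map_zero, HN1, HN2, HN3] at h2
    exact h2
  obtain ⟨H₁, H₂, f1, f2, f3⟩ := core_main a (X 1 ^ 2) (X 2) (X 3) hbdU hn3U
    (Φ (eps c g₁)) (Φ (eps c g₂)) (Φ (eps c g₃)) hsyz2
  set h₁ : MvPolynomial (Fin 6) ℂ := Φ.symm H₁ with hh₁
  set h₂ : MvPolynomial (Fin 6) ℂ := Φ.symm H₂ with hh₂
  have p1 : eps c g₁ = h₁ * X 4 + h₂ * ((X 2) ^ 2 - X 4) := by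
    apply Φ.injective
    rw [f1, hh₁, hh₂]
    simp only [map_add, map_mul, map_sub, map_pow, Φ_X2, Φ_X4, AlgEquiv.apply_symm_apply]
  have p2 : eps c g₂ = -(h₁ * X 2) - h₂ * (X 1) ^ 2 := by
    apply Φ.injective
    rw [f2, hh₁, hh₂]
    simp only [map_sub, map_neg, map_add, map_mul, map_pow, Φ_X1, Φ_X2,
      AlgEquiv.apply_symm_apply]
  have p3 : eps c g₃ = h₁ * ((X 1) ^ 2 + (C c) ^ 5 * (X 5) ^ 5) + h₂ * X 3 := by
    apply Φ.injective
    rw [f3, hh₁, hh₂, ha]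
    simp only [map_add, map_mul, map_pow, Φ_X1, Φ_X3, Φ_X5, Φ_C,
      AlgEquiv.apply_symm_apply]
  set k₁ : MvPolynomial (Fin 6) ℂ := eps c h₁ with hk₁
  set k₂ : MvPolynomial (Fin 6) ℂ := eps c h₂ with hk₂
  have hkk₁ : eps c k₁ = k₁ := eps_eps c h₁
  have hkk₂ : eps c k₂ = k₂ := eps_eps c h₂
  -- the two Laplace syzygies of the three minors
  have Id1 : X 4 * n₁ - X 2 * n₂ + ((X 1) ^ 2 + (X 0) ^ 5 * (X 5) ^ 5) * n₃ = 0 := by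
    rw [n₁, n₂, n₃]; ring
  have Id2 : ((X 2) ^ 2 - X 4) * n₁ - (X 1) ^ 2 * n₂ + X 3 * n₃ = 0 := by
    rw [n₁, n₂, n₃]; ring
  -- the corrected coefficients vanish under eps c, hence are divisible by X 0 - C c
  have hd1 : eps c (g₁ - k₁ * X 4 - k₂ * ((X 2) ^ 2 - X 4)) = 0 := by
    have h5 := congrArg (eps c) p1
    rw [eps_eps c g₁] at h5
    simp only [map_add, map_sub, map_mul, map_pow, eps_X2, eps_X4] at h5 ⊢
    rw [hkk₁, hkk₂, h5]
    ring
  have hd2 : eps c (g₂ + k₁ * X 2 + k₂ * (X 1) ^ 2) = 0 := by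
    have h5 := congrArg (eps c) p2
    rw [eps_eps c g₂] at h5
    simp only [map_add, map_sub, map_neg, map_mul, map_pow, eps_X1, eps_X2] at h5 ⊢
    rw [hkk₁, hkk₂, h5]
    ring
  have hd3 : eps c (g₃ - k₁ * ((X 1) ^ 2 + (X 0) ^ 5 * (X 5) ^ 5) - k₂ * X 3) = 0 := by
    have h5 := congrArg (eps c) p3
    rw [eps_eps c g₃] at h5
    simp only [map_add, map_sub, map_mul, map_pow, eps_X0, eps_X1, eps_X3, eps_X5, eps_C]
      at h5 ⊢
    rw [hkk₁, hkk₂, h5]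
    ring
  obtain ⟨w₁, hw₁⟩ : (X 0 - C c) ∣ (g₁ - k₁ * X 4 - k₂ * ((X 2) ^ 2 - X 4)) := by
    have h6 := eps_dvd c (g₁ - k₁ * X 4 - k₂ * ((X 2) ^ 2 - X 4))
    rw [hd1, sub_zero] at h6
    exact h6
  obtain ⟨w₂, hw₂⟩ : (X 0 - C c) ∣ (g₂ + k₁ * X 2 + k₂ * (X 1) ^ 2) := by
    have h6 := eps_dvd c (g₂ + k₁ * X 2 + k₂ * (X 1) ^ 2)
    rw [hd2, sub_zero] at h6
    exact h6
  obtain ⟨w₃, hw₃⟩ : (X 0 - C c) ∣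
      (g₃ - k₁ * ((X 1) ^ 2 + (X 0) ^ 5 * (X 5) ^ 5) - k₂ * X 3) := by
    have h6 := eps_dvd c
      (g₃ - k₁ * ((X 1) ^ 2 + (X 0) ^ 5 * (X 5) ^ 5) - k₂ * X 3)
    rw [hd3, sub_zero] at h6
    exact h6
  have hfin : (X 0 - C c) * (f - (w₁ * n₁ + w₂ * n₂ + w₃ * n₃)) = 0 := by
    linear_combination hrep + k₁ * Id1 + k₂ * Id2 + n₁ * hw₁ + n₂ * hw₂ + n₃ * hw₃
  have hf : f = w₁ * n₁ + w₂ * n₂ + w₃ * n₃ := by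
    have h7 := (mul_eq_zero.mp hfin).resolve_left (X_sub_C_ne_zero 0 c)
    linear_combination h7
  exact (mem_I_iff f).mpr ⟨w₁, w₂, w₃, hf⟩

end Stmt18

namespace Stmt18

lemma halg (p : Polynomial ℂ) (x : MvPolynomial (Fin 6) ℂ ⧸ I_sE) :
    p • x = Polynomial.aeval (Ideal.Quotient.mk I_sE (X 0)) p * x := by
  rw [Algebra.smul_def]
  rfl

lemma tf0 (p : Polynomial ℂ) (hdeg : p.natDegree = 0) (hp : p ≠ 0)
    (x : MvPolynomial (Fin 6) ℂ ⧸ I_sE)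
    (hx : Polynomial.aeval (Ideal.Quotient.mk I_sE (X 0)) p * x = 0) : x = 0 := by
  have hC : p = Polynomial.C (p.coeff 0) := Polynomial.eq_C_of_natDegree_le_zero hdeg.le
  have ha : p.coeff 0 ≠ 0 := fun h => hp (by rw [hC, h, map_zero])
  rw [hC, Polynomial.aeval_C] at hx
  calc x = algebraMap ℂ _ ((p.coeff 0)⁻¹ * p.coeff 0) * x := by
        rw [inv_mul_cancel₀ ha, map_one, one_mul]
    _ = algebraMap ℂ _ ((p.coeff 0)⁻¹) * ((algebraMap ℂ _ (p.coeff 0)) * x) := by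
        rw [map_mul, mul_assoc]
    _ = 0 := by rw [hx, mul_zero]

lemma tf (n : ℕ) (p : Polynomial ℂ) (hdeg : p.natDegree ≤ n) (hp : p ≠ 0)
    (x : MvPolynomial (Fin 6) ℂ ⧸ I_sE)
    (hx : Polynomial.aeval (Ideal.Quotient.mk I_sE (X 0)) p * x = 0) : x = 0 := by
  induction n generalizing p x with
  | zero => exact tf0 p (Nat.le_zero.mp hdeg) hp x hx
  | succ m ih =>
    by_cases h0 : p.natDegree = 0
    · exact tf0 p h0 hp x hx
    · have hdegpos : 0 < p.degree :=
        Polynomial.natDegree_pos_iff_degree_pos.mp (Nat.pos_of_ne_zero h0)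
      obtain ⟨c, hc⟩ := Complex.exists_root hdegpos
      obtain ⟨q, hq⟩ := Polynomial.dvd_iff_isRoot.mpr hc
      have hq0 : q ≠ 0 := by rintro rfl; rw [mul_zero] at hq; exact hp hq
      have hqdeg : q.natDegree ≤ m := by
        have hX : (Polynomial.X - Polynomial.C c : Polynomial ℂ) ≠ 0 :=
          Polynomial.X_sub_C_ne_zero c
        have h4 := Polynomial.natDegree_mul hX hq0
        rw [← hq, Polynomial.natDegree_X_sub_C] at h4
        omega
      rw [hq, map_mul, mul_assoc] at hx
      have h6 : (Polynomial.aeval (Ideal.Quotient.mk I_sE (X 0)) :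
          Polynomial ℂ →ₐ[ℂ] MvPolynomial (Fin 6) ℂ ⧸ I_sE)
          (Polynomial.X - Polynomial.C c) = Ideal.Quotient.mk I_sE (X 0 - C c) := by
        rw [map_sub, Polynomial.aeval_X, Polynomial.aeval_C, map_sub]
        rfl
      have hy0 : Polynomial.aeval (Ideal.Quotient.mk I_sE (X 0)) q * x = 0 := by
        obtain ⟨w, hw⟩ := Ideal.Quotient.mk_surjective
          (Polynomial.aeval (Ideal.Quotient.mk I_sE (X 0)) q * x)
        have hx2 : Ideal.Quotient.mk I_sE ((X 0 - C c) * w) = 0 := by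
          rw [map_mul, hw, ← h6]
          exact hx
        have h8 : (X 0 - C c) * w ∈ I_sE := Ideal.Quotient.eq_zero_iff_mem.mp hx2
        rw [← hw]
        exact Ideal.Quotient.eq_zero_iff_mem.mpr (reg c w h8)
      exact ih q hqdeg hq0 x hy0

end Stmt18

set_option maxHeartbeats 1000000 in
set_option synthInstance.maxHeartbeats 400000 in
open scoped TensorProduct in
/-- `𝓡 = ℂ[s,A,B,C,D,E]/I_{sE}` is flat as a module over `ℂ[s]` via the
natural map `s ↦` class of `s`. -/
theorem stmt_18 :
    Module.Flat (Polynomial ℂ) (MvPolynomial (Fin 6) ℂ ⧸ I_sE) := by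
  classical
  refine Module.Flat.iff_lift_lsmul_comp_subtype_injective.mpr (fun I _ => ?_)
  obtain ⟨p, hI⟩ := (IsPrincipalIdealRing.principal I).principal
  subst hI
  have hp : p ∈ Ideal.span {p} := Ideal.subset_span (Set.mem_singleton p)
  have key : ∀ z : (Ideal.span {p} : Ideal (Polynomial ℂ))
      ⊗[Polynomial ℂ] (MvPolynomial (Fin 6) ℂ ⧸ I_sE),
      ∃ m, z = (⟨p, hp⟩ : Ideal.span {p}) ⊗ₜ[Polynomial ℂ] m := by
    intro z
    induction z using TensorProduct.induction_on with
    | zero => exact ⟨0, (TensorProduct.tmul_zero _ _).symm⟩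
    | tmul a m =>
      obtain ⟨r, hr⟩ := Ideal.mem_span_singleton'.mp a.2
      refine ⟨r • m, ?_⟩
      have ha : a = r • (⟨p, hp⟩ : Ideal.span {p}) := Subtype.ext (by simp [← hr, smul_eq_mul])
      rw [ha, TensorProduct.smul_tmul]
    | add u v hu hv =>
      obtain ⟨mu, hmu⟩ := hu
      obtain ⟨mv, hmv⟩ := hv
      exact ⟨mu + mv, by rw [hmu, hmv, TensorProduct.tmul_add]⟩
  rw [injective_iff_map_eq_zero]
  intro z hz
  obtain ⟨m, rfl⟩ := key z
  have hz2 : p • m = 0 := by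
    simpa [TensorProduct.lift.tmul] using hz
  by_cases hp0 : p = 0
  · have hzero : (⟨p, hp⟩ : Ideal.span {p}) = 0 := Subtype.ext hp0
    rw [hzero, TensorProduct.zero_tmul]
  · have hm : m = 0 := by
      rw [Stmt18.halg] at hz2
      exact Stmt18.tf p.natDegree p le_rfl hp0 m hz2
    rw [hm, TensorProduct.tmul_zero]
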